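/- arXiv:1712.04290 — 3 statements merged into one kernel-verified Lean document; each statement's English description precedes it below -/
import Mathlib

section
/- Let H be a Hilbert space and let T and T̃ be two self-adjoint positive finite-rank operators of the same rank r, with spectral decompositions T = Σ_{j=1}^r λ_j (η_j ⊗ η_j) and T̃ = Σ_{j=1}^r λ̃_j (η̃_j ⊗ η̃_j), where λ_1 ≥ ... ≥ λ_r > 0 and λ̃_1 ≥ ... ≥ λ̃_r > 0. Then the Hilbert–Schmidt norm of the difference of Moore–Penrose inverses satisfies |||T̃⁻ − T⁻|||_HS ≤ Σ_{j=1}^r λ̃_j^{-1} λ_j^{-1} |λ̃_j − λ_j| + 2 Σ_{j=1}^r λ_j^{-1} ‖η̃_j − η_j‖. -/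
open scoped InnerProductSpace
noncomputable section

variable {H : Type*} [NormedAddCommGroup H] [InnerProductSpace ℝ H]

/-- The rank-one operator `u ⊗ v : w ↦ ⟨w, v⟩ u`. -/
def rankOne (u v : H) : H →L[ℝ] H := (innerSL ℝ v).smulRight u

/-- The Hilbert–Schmidt inner product computed in a Hilbert basis. -/
def hsInner {ι : Type*} (b : HilbertBasis ι ℝ H) (S T : H →L[ℝ] H) : ℝ :=
  ∑' i, ⟪S (b i), T (b i)⟫_ℝ

/-- The Hilbert–Schmidt norm. -/
def hsNorm {ι : Type*} (b : HilbertBasis ι ℝ H) (S : H →L[ℝ] H) : ℝ :=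
  Real.sqrt (hsInner b S S)

lemma rankOne_apply (u v w : H) : rankOne u v w = ⟪w, v⟫_ℝ • u := by
  simp [rankOne, real_inner_comm]

lemma hsNorm_sum_rankOne_le [CompleteSpace H] {ι κ : Type*} [Fintype κ]
    (b : HilbertBasis ι ℝ H) (u v : κ → H) :
    hsNorm b (∑ k, rankOne (u k) (v k)) ≤ ∑ k, ‖u k‖ * ‖v k‖ := by
  have hsummable : ∀ k l : κ,
      Summable fun i => ⟪b i, v k⟫_ℝ * (⟪b i, v l⟫_ℝ * ⟪u k, u l⟫_ℝ) := by
    intro k l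
    have h := (b.summable_inner_mul_inner (v k) (v l)).mul_right ⟪u k, u l⟫_ℝ
    refine h.congr fun i => ?_
    rw [real_inner_comm (v k) (b i)]; ring
  have htsum : ∀ k l : κ,
      ∑' i, ⟪b i, v k⟫_ℝ * (⟪b i, v l⟫_ℝ * ⟪u k, u l⟫_ℝ)
        = ⟪v k, v l⟫_ℝ * ⟪u k, u l⟫_ℝ := by
    intro k l
    calc ∑' i, ⟪b i, v k⟫_ℝ * (⟪b i, v l⟫_ℝ * ⟪u k, u l⟫_ℝ)
        = ∑' i, (⟪v k, b i⟫_ℝ * ⟪b i, v l⟫_ℝ) * ⟪u k, u l⟫_ℝ := by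
          refine tsum_congr fun i => ?_
          rw [real_inner_comm (b i) (v k)]; ring
      _ = (∑' i, ⟪v k, b i⟫_ℝ * ⟪b i, v l⟫_ℝ) * ⟪u k, u l⟫_ℝ := tsum_mul_right
      _ = ⟪v k, v l⟫_ℝ * ⟪u k, u l⟫_ℝ := by rw [b.tsum_inner_mul_inner]
  have key : hsInner b (∑ k, rankOne (u k) (v k)) (∑ k, rankOne (u k) (v k))
      = ∑ k, ∑ l, ⟪v k, v l⟫_ℝ * ⟪u k, u l⟫_ℝ := by
    unfold hsInner
    have happ : ∀ i : ι, ⟪(∑ k, rankOne (u k) (v k)) (b i), (∑ k, rankOne (u k) (v k)) (b i)⟫_ℝ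
        = ∑ k, ∑ l, ⟪b i, v k⟫_ℝ * (⟪b i, v l⟫_ℝ * ⟪u k, u l⟫_ℝ) := by
      intro i
      rw [ContinuousLinearMap.sum_apply, sum_inner]
      refine Finset.sum_congr rfl fun k _ => ?_
      rw [inner_sum]
      refine Finset.sum_congr rfl fun l _ => ?_
      rw [rankOne_apply, rankOne_apply, real_inner_smul_left, real_inner_smul_right]
    simp_rw [happ]
    rw [Summable.tsum_finsetSum fun k _ => summable_sum fun l _ => hsummable k l]
    exact Finset.sum_congr rfl fun k _ => by
      rw [Summable.tsum_finsetSum fun l _ => hsummable k l]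
      exact Finset.sum_congr rfl fun l _ => htsum k l
  have hbound : hsInner b (∑ k, rankOne (u k) (v k)) (∑ k, rankOne (u k) (v k))
      ≤ (∑ k, ‖u k‖ * ‖v k‖) ^ 2 := by
    rw [key, sq, Finset.sum_mul_sum]
    refine Finset.sum_le_sum fun k _ => Finset.sum_le_sum fun l _ => ?_
    calc ⟪v k, v l⟫_ℝ * ⟪u k, u l⟫_ℝ ≤ |⟪v k, v l⟫_ℝ * ⟪u k, u l⟫_ℝ| := le_abs_self _
      _ = |⟪v k, v l⟫_ℝ| * |⟪u k, u l⟫_ℝ| := abs_mul _ _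
      _ ≤ (‖v k‖ * ‖v l‖) * (‖u k‖ * ‖u l‖) :=
          mul_le_mul (abs_real_inner_le_norm _ _) (abs_real_inner_le_norm _ _)
            (abs_nonneg _) (by positivity)
      _ = ‖u k‖ * ‖v k‖ * (‖u l‖ * ‖v l‖) := by ring
  have hnn : (0:ℝ) ≤ ∑ k, ‖u k‖ * ‖v k‖ :=
    Finset.sum_nonneg fun k _ => by positivity
  calc hsNorm b (∑ k, rankOne (u k) (v k))
      ≤ Real.sqrt ((∑ k, ‖u k‖ * ‖v k‖) ^ 2) := Real.sqrt_le_sqrt hbound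
    _ = ∑ k, ‖u k‖ * ‖v k‖ := by rw [Real.sqrt_sq hnn]

/-- For two self-adjoint positive rank-`r` operators `T = Σ λ_j (η_j ⊗ η_j)` and
`T̃ = Σ λ̃_j (η̃_j ⊗ η̃_j)` with decreasing positive eigenvalues, the Moore–Penrose inverses
`T⁻ = Σ λ_j⁻¹(η_j ⊗ η_j)`, `T̃⁻ = Σ λ̃_j⁻¹(η̃_j ⊗ η̃_j)` satisfy
`|||T̃⁻ − T⁻|||_HS ≤ Σ_j λ̃_j⁻¹ λ_j⁻¹ |λ̃_j − λ_j| + 2 Σ_j λ_j⁻¹ ‖η̃_j − η_j‖`. -/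
theorem stmt4 [CompleteSpace H] [TopologicalSpace.SeparableSpace H]
    {ι : Type*} (b : HilbertBasis ι ℝ H) (r : ℕ)
    (η ηt : Fin r → H) (hη : Orthonormal ℝ η) (hηt : Orthonormal ℝ ηt)
    (lam lamt : Fin r → ℝ) (hlam : ∀ j, 0 < lam j) (hlamt : ∀ j, 0 < lamt j)
    (hmono : Antitone lam) (hmonot : Antitone lamt) :
    hsNorm b ((∑ j, (lamt j)⁻¹ • rankOne (ηt j) (ηt j)) -
        ∑ j, (lam j)⁻¹ • rankOne (η j) (η j)) ≤
      (∑ j, (lamt j)⁻¹ * (lam j)⁻¹ * |lamt j - lam j|) +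
        2 * ∑ j, (lam j)⁻¹ * ‖ηt j - η j‖ := by
  set u : Fin r ⊕ (Fin r ⊕ Fin r) → H :=
    Sum.elim (fun j => ((lamt j)⁻¹ - (lam j)⁻¹) • ηt j)
      (Sum.elim (fun j => (lam j)⁻¹ • (ηt j - η j)) (fun j => (lam j)⁻¹ • η j)) with hu
  set v : Fin r ⊕ (Fin r ⊕ Fin r) → H :=
    Sum.elim (fun j => ηt j) (Sum.elim (fun j => ηt j) (fun j => ηt j - η j)) with hv
  have hop : (∑ j, (lamt j)⁻¹ • rankOne (ηt j) (ηt j)) -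
      ∑ j, (lam j)⁻¹ • rankOne (η j) (η j) = ∑ p, rankOne (u p) (v p) := by
    rw [Fintype.sum_sum_type, Fintype.sum_sum_type]
    simp only [hu, hv, Sum.elim_inl, Sum.elim_inr]
    rw [← Finset.sum_sub_distrib, ← Finset.sum_add_distrib, ← Finset.sum_add_distrib]
    refine Finset.sum_congr rfl fun j _ => ?_
    ext w
    simp only [ContinuousLinearMap.sub_apply, ContinuousLinearMap.add_apply,
      ContinuousLinearMap.smul_apply, rankOne_apply, inner_sub_right]
    module
  rw [hop]
  refine (hsNorm_sum_rankOne_le b u v).trans_eq ?_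
  rw [Fintype.sum_sum_type, Fintype.sum_sum_type]
  simp only [hu, hv, Sum.elim_inl, Sum.elim_inr]
  have h1 : ∀ j, ‖η j‖ = 1 := fun j => hη.1 j
  have h2 : ∀ j, ‖ηt j‖ = 1 := fun j => hηt.1 j
  have habs : ∀ j : Fin r, |(lamt j)⁻¹ - (lam j)⁻¹|
      = (lamt j)⁻¹ * (lam j)⁻¹ * |lamt j - lam j| := by
    intro j
    have ha := (hlamt j).ne'
    have hb := (hlam j).ne'
    have h : (lamt j)⁻¹ - (lam j)⁻¹ = (lamt j)⁻¹ * (lam j)⁻¹ * (lam j - lamt j) := by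
      field_simp
    rw [h, abs_mul, abs_sub_comm, abs_of_pos (mul_pos (inv_pos.mpr (hlamt j)) (inv_pos.mpr (hlam j)))]
  simp_rw [norm_smul, Real.norm_eq_abs, h1, h2, habs, mul_one,
    abs_of_pos (inv_pos.mpr (hlam _))]
  rw [Finset.mul_sum, ← Finset.sum_add_distrib]
  congr 1
  exact Finset.sum_congr rfl fun j _ => by ring
end
end

section
/- Let W = X + U be random elements in a separable Hilbert space, where y is a square-integrable real random variable with E(ε | W) = 0 for ε = y − α − ⟨X, β⟩, and where cov(U, y) = 0 (the measurement error is uncorrelated with the response). Then cov(y, W) = cov(y, X) = K_X β, where K_X is the covariance operator of X, provided β lies in the range of K_X; hence β = K_X⁻ cov(y, W) where K_X⁻ is the Moore–Penrose inverse. -/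
open scoped InnerProductSpace
open MeasureTheory
noncomputable section

variable {H : Type*} [NormedAddCommGroup H] [InnerProductSpace ℝ H]

lemma inner_smul_self_integrable {Ω : Type*} [MeasurableSpace Ω] {μ : Measure Ω}
    [IsProbabilityMeasure μ] {X : Ω → H} (hX2 : MemLp X 2 μ) (u : H) :
    Integrable (fun ω => ⟪X ω, u⟫_ℝ • X ω) μ := by
  have h : MemLp ((fun ω => ⟪X ω, u⟫_ℝ) • X) 1 μ := by
    refine MemLp.smul hX2 (hX2.inner_const u) (hpqr := ⟨?_⟩)
    rw [inv_one, ENNReal.inv_two_add_inv_two]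
  exact (memLp_one_iff_integrable.mp h)

/-- In the scalar-on-function model `y = α + ⟨X, β⟩ + ε` with `W = X + U`, mean-zero
uncorrelated `X, U`, `E(X ε) = 0`, and `cov(U, y) = 0`, one has
`cov(y, W) = cov(y, X) = K_X β`; hence `β = K_X⁻ cov(y, W)` for any Moore–Penrose
inverse `K_X⁻` of `K_X`, provided `β` lies in the range of `K_X`. -/
theorem stmt11 [CompleteSpace H] [TopologicalSpace.SeparableSpace H]
    {Ω : Type*} [MeasurableSpace Ω] (μ : Measure Ω) [IsProbabilityMeasure μ]
    (X U W : Ω → H) (hWdef : ∀ ω, W ω = X ω + U ω)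
    (y : Ω → ℝ) (α : ℝ) (β : H)
    (hX2 : MemLp X 2 μ) (hU2 : MemLp U 2 μ) (hy2 : MemLp y 2 μ)
    (hX0 : ∫ ω, X ω ∂μ = 0) (hU0 : ∫ ω, U ω ∂μ = 0)
    (huncorr : ∀ u v : H, ∫ ω, ⟪X ω, u⟫_ℝ * ⟪U ω, v⟫_ℝ ∂μ = 0)
    (hεX : ∫ ω, (y ω - α - ⟪X ω, β⟫_ℝ) • X ω ∂μ = 0)
    (hUy : ∫ ω, y ω • U ω ∂μ = 0)
    (hyXint : Integrable (fun ω => y ω • X ω) μ)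
    (hyUint : Integrable (fun ω => y ω • U ω) μ)
    (KX : H →L[ℝ] H) (hKX : ∀ v, KX v = ∫ ω, ⟪X ω, v⟫_ℝ • X ω ∂μ)
    (hrange : ∃ γ, KX γ = β) :
    (∫ ω, y ω • W ω ∂μ = ∫ ω, y ω • X ω ∂μ) ∧
      (∫ ω, y ω • X ω ∂μ = KX β) ∧
      ∀ S : H →L[ℝ] H, KX.comp (S.comp KX) = KX → S.comp (KX.comp S) = S →
        IsSelfAdjoint (KX.comp S) → IsSelfAdjoint (S.comp KX) →
        S (∫ ω, y ω • W ω ∂μ) = β := by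
  have hXint : Integrable X μ := hX2.integrable one_le_two
  -- Part 1
  have h1 : ∫ ω, y ω • W ω ∂μ = ∫ ω, y ω • X ω ∂μ := by
    simp_rw [hWdef, smul_add]
    rw [integral_add hyXint hyUint, hUy, add_zero]
  -- Part 2
  have h2 : ∫ ω, y ω • X ω ∂μ = KX β := by
    have hβint : Integrable (fun ω => ⟪X ω, β⟫_ℝ • X ω) μ :=
      inner_smul_self_integrable hX2 β
    have hαint : Integrable (fun ω => α • X ω) μ := hXint.smul α
    simp only [sub_smul] at hεX
    have hsub : Integrable (fun ω => y ω • X ω - α • X ω) μ := hyXint.sub hαint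
    rw [integral_sub hsub hβint,
      integral_sub hyXint hαint,
      integral_smul, hX0, smul_zero, sub_zero, ← hKX, sub_eq_zero] at hεX
    exact hεX
  refine ⟨h1, h2, ?_⟩
  -- Part 3
  intro S hKSK hSKS _hsa1 hsa2
  obtain ⟨γ, hγ⟩ := hrange
  -- symmetry of KX
  have hsym : ∀ a b : H, ⟪KX a, b⟫_ℝ = ⟪a, KX b⟫_ℝ := by
    intro a b
    have ha := inner_smul_self_integrable hX2 a
    have hb := inner_smul_self_integrable hX2 b
    rw [real_inner_comm, hKX a, hKX b, ← integral_inner ha b, ← integral_inner hb a]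
    simp_rw [real_inner_smul_right]
    congr 1; funext ω
    rw [real_inner_comm (X ω) b, real_inner_comm a (X ω)]
    ring
  set P : H →L[ℝ] H := S.comp KX with hPdef
  have hPβ : P β = β := by
    have hKP : KX (P β) = KX β := by
      have := congrArg (fun T : H →L[ℝ] H => T β) hKSK
      simpa using this
    have hPP : P (P β) = P β := by
      have := congrArg (fun T : H →L[ℝ] H => T (KX β)) hSKS
      simpa [hPdef] using this
    have hz : ⟪β - P β, β - P β⟫_ℝ = 0 := by
      rw [inner_sub_right]
      have t1 : ⟪β - P β, β⟫_ℝ = 0 := by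
        have e1 : ⟪β - P β, β⟫_ℝ = ⟪KX (β - P β), γ⟫_ℝ := by rw [hsym, hγ]
        have e2 : KX (β - P β) = 0 := by rw [map_sub, hKP, sub_self]
        rw [e1, e2, inner_zero_left]
      have t2 : ⟪β - P β, P β⟫_ℝ = 0 := by
        have hsymP := hsa2.isSymmetric (β - P β) β
        simp only [ContinuousLinearMap.coe_coe] at hsymP
        rw [← hsymP, map_sub, hPP, sub_self, inner_zero_left]
      rw [t1, t2, sub_zero]
    have hd := inner_self_eq_zero.mp hz
    rw [sub_eq_zero] at hd
    exact hd.symm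
  rw [h1, h2]
  exact hPβ
end
end

section
/- Let T_n, T be self-adjoint finite-rank operators on a Hilbert space H with T_n → T in operator norm and rank(T_n) = rank(T) for all sufficiently large n. Then the Moore–Penrose inverses converge: T_n⁻ → T⁻ in operator norm. -/
open Filter RealInnerProductSpace
noncomputable section

variable {H : Type*} [NormedAddCommGroup H] [InnerProductSpace ℝ H]

section Helpers
variable [CompleteSpace H]

lemma symm_of_sa (R : H →L[ℝ] H) (h1 : IsSelfAdjoint R) (x y : H) : ⟪R x, y⟫ = ⟪x, R y⟫ := by
  simpa using (ContinuousLinearMap.isSelfAdjoint_iff_isSymmetric.mp h1) x y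

lemma contraction_of_proj (R : H →L[ℝ] H) (h1 : IsSelfAdjoint R) (h2 : R.comp R = R) (z : H) :
    ‖R z‖ ≤ ‖z‖ := by
  have hRR : R (R z) = R z := DFunLike.congr_fun h2 z
  have h3 : ⟪z, R z⟫ = ‖R z‖ ^ 2 := by
    rw [← real_inner_self_eq_norm_sq]
    conv_lhs => rw [← hRR]
    exact (symm_of_sa R h1 z (R z)).symm
  have h4 : ⟪z, R z⟫ ≤ ‖z‖ * ‖R z‖ := real_inner_le_norm z (R z)
  nlinarith [norm_nonneg (R z), norm_nonneg z]

lemma apply_eq_zero_of_mem_orth (A : H →L[ℝ] H) (h : IsSelfAdjoint A) (w : H)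
    (hw : w ∈ (LinearMap.range (A : H →ₗ[ℝ] H))ᗮ) : A w = 0 := by
  have : ⟪A w, A w⟫ = 0 := by
    rw [symm_of_sa A h w (A w), real_inner_comm]
    exact hw (A (A w)) ⟨A w, rfl⟩
  exact inner_self_eq_zero.mp this

set_option maxHeartbeats 1000000 in
lemma key_lower (A B : H →L[ℝ] H) (hA : IsSelfAdjoint A)
    [FiniteDimensional ℝ (LinearMap.range (A : H →ₗ[ℝ] H))] [FiniteDimensional ℝ (LinearMap.range (B : H →ₗ[ℝ] H))]
    (hr : Module.finrank ℝ (LinearMap.range (A : H →ₗ[ℝ] H)) = Module.finrank ℝ (LinearMap.range (B : H →ₗ[ℝ] H)))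
    (σ : ℝ) (hσ : ∀ y ∈ LinearMap.range (B : H →ₗ[ℝ] H), σ * ‖y‖ ≤ ‖B y‖)
    (x : H) (hx : x ∈ LinearMap.range (A : H →ₗ[ℝ] H)) :
    (σ - ‖A - B‖) * ‖x‖ ≤ ‖A x‖ := by
  rcases eq_or_ne x 0 with rfl | hx0
  · simp
  set Vn := LinearMap.range (A : H →ₗ[ℝ] H) with hVn
  haveI : CompleteSpace Vn := FiniteDimensional.complete ℝ Vn
  set xs : Vn := ⟨x, hx⟩ with hxsdef
  have hxs : xs ≠ 0 := by
    simp only [hxsdef, ne_eq, Submodule.mk_eq_zero]; exact hx0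
  set pr := Vn.orthogonalProjectionOnto with hpr
  set g : ↥(LinearMap.range (B : H →ₗ[ℝ] H)) →ₗ[ℝ] (Vn ⧸ (ℝ ∙ xs)) :=
    ((ℝ ∙ xs).mkQ).comp ((pr.toLinearMap).comp (LinearMap.range (B : H →ₗ[ℝ] H)).subtype) with hg
  have hq : Module.finrank ℝ (Vn ⧸ (ℝ ∙ xs)) + 1 = Module.finrank ℝ Vn := by
    rw [← finrank_span_singleton (K := ℝ) hxs]
    exact Submodule.finrank_quotient_add_finrank _
  have hginj : ¬ Function.Injective g := by
    intro hinj
    have := LinearMap.finrank_le_finrank_of_injective hinj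
    omega
  rw [injective_iff_map_eq_zero] at hginj
  push_neg at hginj
  obtain ⟨ys, hgys, hys0⟩ := hginj
  have hmem : (pr (ys : H) : Vn) ∈ (ℝ ∙ xs) := by
    have : ((ℝ ∙ xs).mkQ) (pr (ys : H)) = 0 := hgys
    rwa [Submodule.mkQ_apply, Submodule.Quotient.mk_eq_zero] at this
  obtain ⟨c, hc⟩ := Submodule.mem_span_singleton.mp hmem
  set y : H := (ys : H) with hydef
  have hy0 : y ≠ 0 := fun h => hys0 (Subtype.ext h)
  have hpy : ((pr y : Vn) : H) = c • x := by
    rw [← hc]; rfl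
  have hAy : A y = c • A x := by
    have horth : y - ((pr y : Vn) : H) ∈ Vnᗮ := Submodule.sub_starProjection_mem_orthogonal (K := Vn) y
    have h0 : A (y - ((pr y : Vn) : H)) = 0 := apply_eq_zero_of_mem_orth A hA _ horth
    have : A y - A (((pr y : Vn) : H)) = 0 := by rw [← map_sub]; exact h0
    have h2 : A y = A (((pr y : Vn) : H)) := sub_eq_zero.mp this
    rw [h2, hpy, map_smul]
  have hy_pos : 0 < ‖y‖ := norm_pos_iff.mpr hy0
  have hx_pos : 0 < ‖x‖ := norm_pos_iff.mpr hx0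
  have hcb : |c| * ‖x‖ ≤ ‖y‖ := by
    have h1 : ‖((pr y : Vn) : H)‖ ≤ ‖y‖ := by
      have := (pr).le_opNorm y
      calc ‖((pr y : Vn) : H)‖ = ‖pr y‖ := rfl
      _ ≤ ‖pr‖ * ‖y‖ := pr.le_opNorm y
      _ ≤ 1 * ‖y‖ := by
          gcongr
          exact Vn.orthogonalProjectionOnto_norm_le
      _ = ‖y‖ := one_mul _
    rw [hpy, norm_smul, Real.norm_eq_abs] at h1
    exact h1
  have hσy : σ * ‖y‖ ≤ ‖B y‖ := hσ y ys.2
  have hBy : ‖B y‖ ≤ ‖A - B‖ * ‖y‖ + |c| * ‖A x‖ := by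
    have hd : B y = (B - A) y + A y := by simp
    calc ‖B y‖ = ‖(B - A) y + A y‖ := by rw [← hd]
    _ ≤ ‖(B - A) y‖ + ‖A y‖ := norm_add_le _ _
    _ ≤ ‖B - A‖ * ‖y‖ + ‖A y‖ := by gcongr; exact (B - A).le_opNorm y
    _ = ‖A - B‖ * ‖y‖ + ‖A y‖ := by rw [norm_sub_rev]
    _ = ‖A - B‖ * ‖y‖ + |c| * ‖A x‖ := by rw [hAy, norm_smul, Real.norm_eq_abs]
  nlinarith [abs_nonneg c, norm_nonneg (A x),
    mul_le_mul_of_nonneg_right hcb (norm_nonneg (A x))]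


end Helpers

set_option maxHeartbeats 2000000 in
/-- If `T_n → T` in operator norm with all `T_n, T` self-adjoint and finite rank, with
`rank T_n = rank T` for all sufficiently large `n`, then the Moore–Penrose inverses converge
in operator norm: `T_n⁻ → T⁻`. -/
theorem stmt15 [CompleteSpace H] [TopologicalSpace.SeparableSpace H]
    (T : ℕ → H →L[ℝ] H) (Tlim : H →L[ℝ] H)
    (hsa : ∀ n, IsSelfAdjoint (T n)) (hsal : IsSelfAdjoint Tlim)
    (hfr : ∀ n, FiniteDimensional ℝ (LinearMap.range (T n : H →ₗ[ℝ] H)))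
    (hfrl : FiniteDimensional ℝ (LinearMap.range (Tlim : H →ₗ[ℝ] H)))
    (hconv : Tendsto (fun n => ‖T n - Tlim‖) atTop (nhds 0))
    (hrank : ∀ᶠ n in atTop,
      Module.finrank ℝ (LinearMap.range (T n : H →ₗ[ℝ] H)) = Module.finrank ℝ (LinearMap.range (Tlim : H →ₗ[ℝ] H)))
    (S : ℕ → H →L[ℝ] H) (Slim : H →L[ℝ] H)
    (hmp : ∀ n, (T n).comp ((S n).comp (T n)) = T n ∧ (S n).comp ((T n).comp (S n)) = S n ∧
      IsSelfAdjoint ((T n).comp (S n)) ∧ IsSelfAdjoint ((S n).comp (T n)))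
    (hmpl : Tlim.comp (Slim.comp Tlim) = Tlim ∧ Slim.comp (Tlim.comp Slim) = Slim ∧
      IsSelfAdjoint (Tlim.comp Slim) ∧ IsSelfAdjoint (Slim.comp Tlim)) :
    Tendsto (fun n => ‖S n - Slim‖) atTop (nhds 0) := by
  obtain ⟨hT1l, hS1l, hPl, hQl⟩ := hmpl
  haveI := hfrl
  by_cases hr0 : Module.finrank ℝ (LinearMap.range (Tlim : H →ₗ[ℝ] H)) = 0
  · -- degenerate case: everything is zero
    have hTl0 : Tlim = 0 := by
      have hbot : LinearMap.range (Tlim : H →ₗ[ℝ] H) = ⊥ := Submodule.finrank_eq_zero.mp hr0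
      ext z
      have : Tlim z ∈ LinearMap.range (Tlim : H →ₗ[ℝ] H) := ⟨z, rfl⟩
      rw [hbot] at this; simpa using this
    have hSl0 : Slim = 0 := by
      rw [← hS1l, hTl0]; ext z; simp
    have hev : ∀ᶠ n in atTop, ‖S n - Slim‖ = (0 : ℝ) := by
      filter_upwards [hrank] with n hrn
      haveI := hfr n
      have hbot : LinearMap.range (T n : H →ₗ[ℝ] H) = ⊥ :=
        Submodule.finrank_eq_zero.mp (by rw [hrn, hr0])
      have hTn0 : T n = 0 := by
        ext z
        have : T n z ∈ LinearMap.range (T n : H →ₗ[ℝ] H) := ⟨z, rfl⟩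
        rw [hbot] at this; simpa using this
      have hSn0 : S n = 0 := by rw [← (hmp n).2.1, hTn0]; ext z; simp
      rw [hSn0, hSl0]; simp
    exact Tendsto.congr' (hev.mono fun n h => h.symm) tendsto_const_nhds
  · have hrpos : 0 < Module.finrank ℝ (LinearMap.range (Tlim : H →ₗ[ℝ] H)) := Nat.pos_of_ne_zero hr0
    set V := LinearMap.range (Tlim : H →ₗ[ℝ] H) with hV
    haveI : CompleteSpace V := FiniteDimensional.complete ℝ V
    haveI : Nontrivial V := Module.nontrivial_of_finrank_pos hrpos
    obtain ⟨u, humem, hmin'⟩ := (isCompact_sphere (0 : V) 1).exists_isMinOn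
      (NormedSpace.sphere_nonempty.mpr zero_le_one)
      ((Tlim.continuous.comp continuous_subtype_val).norm.continuousOn)
    have hmin : ∀ v ∈ Metric.sphere (0 : V) 1, ‖Tlim (u : H)‖ ≤ ‖Tlim (v : H)‖ :=
      fun v hv => hmin' hv
    have hu1 : ‖(u : H)‖ = 1 := by
      have := mem_sphere_zero_iff_norm.mp humem
      simpa using this
    set σ := ‖Tlim (u : H)‖ with hσdef
    have hσpos : 0 < σ := by
      rcases (norm_nonneg (Tlim (u : H))).lt_or_eq with h | h
      · exact h
      · exfalso
        have hTu : Tlim (u : H) = 0 := by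
          have := h.symm; rwa [norm_eq_zero] at this
        obtain ⟨w, hw⟩ := u.2
        replace hw : Tlim w = (u : H) := hw
        have : ⟪Tlim w, Tlim w⟫ = 0 := by
          rw [symm_of_sa Tlim hsal w (Tlim w), hw, hTu, inner_zero_right]
        have h0 : (u : H) = 0 := by rw [← hw]; exact inner_self_eq_zero.mp this
        rw [h0] at hu1; simp at hu1
    have hσ : ∀ y ∈ V, σ * ‖y‖ ≤ ‖Tlim y‖ := by
      intro y hy
      rcases eq_or_ne y 0 with rfl | hy0
      · simp
      · have hyn : 0 < ‖y‖ := norm_pos_iff.mpr hy0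
        set ys : V := ⟨y, hy⟩ with hysdef
        have hmem : (‖y‖⁻¹ : ℝ) • ys ∈ Metric.sphere (0 : V) 1 := by
          rw [mem_sphere_zero_iff_norm]
          have : ‖(‖y‖⁻¹ : ℝ) • ys‖ = ‖y‖⁻¹ * ‖ys‖ := by
            rw [norm_smul, Real.norm_eq_abs, abs_of_pos (by positivity)]
          rw [this]
          have : ‖ys‖ = ‖y‖ := rfl
          rw [this, inv_mul_cancel₀ hyn.ne']
        have := hmin _ hmem
        have hcoe : ((((‖y‖⁻¹ : ℝ) • ys) : V) : H) = (‖y‖⁻¹ : ℝ) • y := rfl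
        rw [hcoe] at this
        rw [map_smul, norm_smul, Real.norm_eq_abs, abs_of_pos (by positivity)] at this
        calc σ * ‖y‖ ≤ (‖y‖⁻¹ * ‖Tlim y‖) * ‖y‖ := by nlinarith
        _ = ‖Tlim y‖ := by field_simp
    -- the constant
    set K : ℝ := 2 / σ with hK
    have hKpos : 0 < K := by positivity
    set C : ℝ := K * ‖Slim‖ + K * K + ‖Slim‖ * ‖Slim‖ with hC
    have hCpos : 0 ≤ C := by positivity
    -- squeeze
    apply squeeze_zero' (g := fun n => C * ‖T n - Tlim‖)
    · exact Eventually.of_forall fun n => norm_nonneg _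
    · filter_upwards [hrank, hconv.eventually_le_const (show (0:ℝ) < σ/2 by positivity)]
        with n hrn hεn
      haveI := hfr n
      set ε := ‖T n - Tlim‖ with hε
      have hε0 : 0 ≤ ε := norm_nonneg _
      -- uniform bound on ‖S n‖
      have hSnorm : ‖S n‖ ≤ K := by
        apply ContinuousLinearMap.opNorm_le_bound _ hKpos.le
        intro z
        have hmemrange : S n z ∈ LinearMap.range (T n : H →ₗ[ℝ] H) := by
          have hst : (S n).comp (T n) = (T n).comp (ContinuousLinearMap.adjoint (S n)) := by
            have h1 : star ((S n).comp (T n)) = (S n).comp (T n) := (hmp n).2.2.2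
            have h2 : star ((S n).comp (T n)) =
                (T n).comp (ContinuousLinearMap.adjoint (S n)) := by
              show star ((S n) * (T n)) = (T n) * (ContinuousLinearMap.adjoint (S n))
              rw [star_mul]
              congr 1
              exact hsa n
            rw [← h1, h2]
          have : S n z = ((S n).comp ((T n).comp (S n))) z := by rw [(hmp n).2.1]
          rw [this]
          have : ((S n).comp ((T n).comp (S n))) z = ((S n).comp (T n)) ((S n) z) := rfl
          rw [this, hst]
          exact ⟨ContinuousLinearMap.adjoint (S n) (S n z), rfl⟩
        have hlow := key_lower (T n) Tlim (hsa n) hrn σ hσ (S n z) hmemrange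
        have hcontr : ‖T n (S n z)‖ ≤ ‖z‖ := by
          have hidem : ((T n).comp (S n)).comp ((T n).comp (S n)) = (T n).comp (S n) := by
            ext w
            simp only [ContinuousLinearMap.comp_apply]
            exact DFunLike.congr_fun (hmp n).1 (S n w)
          have := contraction_of_proj ((T n).comp (S n)) (hmp n).2.2.1 hidem z
          simpa using this
        have h2 : σ - ε ≥ σ / 2 := by linarith
        have hz0 : 0 ≤ ‖z‖ := norm_nonneg _
        have hS0 : 0 ≤ ‖S n z‖ := norm_nonneg _
        rw [hK, show 2 / σ * ‖z‖ = 2 * ‖z‖ / σ by ring, le_div_iff₀ hσpos]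
        nlinarith [hlow, hcontr, mul_le_mul_of_nonneg_right h2 hS0]
      -- abbreviations in ring notation
      have hT1 : T n * (S n * T n) = T n := (hmp n).1
      have hS1 : S n * (T n * S n) = S n := (hmp n).2.1
      have hPn : IsSelfAdjoint ((T n) * (S n)) := (hmp n).2.2.1
      have hQn : IsSelfAdjoint ((S n) * (T n)) := (hmp n).2.2.2
      have hT1l' : Tlim * (Slim * Tlim) = Tlim := hT1l
      have hPl' : IsSelfAdjoint (Tlim * Slim) := hPl
      have hQl' : IsSelfAdjoint (Slim * Tlim) := hQl
      have hS1l' : Slim * (Tlim * Slim) = Slim := hS1l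
      -- decomposition (pure ring identity)
      have hdec : S n - Slim =
          -(S n * ((T n - Tlim) * Slim)) + (S n * (1 - Tlim * Slim))
            - ((1 - S n * T n) * Slim) := by noncomm_ring
      -- Term 1
      have hE1 : ‖S n * ((T n - Tlim) * Slim)‖ ≤ K * (ε * ‖Slim‖) := by
        calc ‖S n * ((T n - Tlim) * Slim)‖ ≤ ‖S n‖ * ‖(T n - Tlim) * Slim‖ := norm_mul_le _ _
        _ ≤ ‖S n‖ * (‖T n - Tlim‖ * ‖Slim‖) := by
            gcongr
            exact norm_mul_le _ _
        _ ≤ K * (ε * ‖Slim‖) := by gcongr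
      -- facts about 1 - Tlim * Slim
      have hPidem : (Tlim * Slim) * (Tlim * Slim) = Tlim * Slim := by
        rw [mul_assoc, hS1l']
      have h1P_sa : IsSelfAdjoint ((1 : H →L[ℝ] H) - Tlim * Slim) :=
        (IsSelfAdjoint.one _).sub hPl
      have h1Pidem : ((1 : H →L[ℝ] H) - Tlim * Slim) * (1 - Tlim * Slim) = 1 - Tlim * Slim := by
        rw [sub_mul, one_mul, mul_sub, mul_one, hPidem]
        abel
      have h1P_op : ‖(1 : H →L[ℝ] H) - Tlim * Slim‖ ≤ 1 := by
        apply ContinuousLinearMap.opNorm_le_bound _ zero_le_one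
        intro w
        rw [one_mul]
        exact contraction_of_proj _ h1P_sa h1Pidem w
      -- Term 2
      have hzeroP : ((1 : H →L[ℝ] H) - Tlim * Slim) * Tlim = 0 := by
        rw [sub_mul, one_mul, mul_assoc, hT1l', sub_self]
      have hsplit : ((1 : H →L[ℝ] H) - Tlim * Slim) * (T n * S n)
          = ((1 : H →L[ℝ] H) - Tlim * Slim) * ((T n - Tlim) * S n) := by
        conv_rhs => rw [sub_mul (T n) Tlim (S n),
          mul_sub ((1 : H →L[ℝ] H) - Tlim * Slim) (T n * S n) (Tlim * S n),
          ← mul_assoc ((1 : H →L[ℝ] H) - Tlim * Slim) Tlim (S n), hzeroP, zero_mul, sub_zero]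
      have hstar : ‖(T n * S n) * ((1 : H →L[ℝ] H) - Tlim * Slim)‖
          = ‖((1 : H →L[ℝ] H) - Tlim * Slim) * (T n * S n)‖ := by
        rw [← norm_star ((T n * S n) * ((1 : H →L[ℝ] H) - Tlim * Slim)), star_mul,
          h1P_sa.star_eq, hPn.star_eq]
      have hE2 : ‖S n * ((1 : H →L[ℝ] H) - Tlim * Slim)‖ ≤ K * (ε * K) := by
        have hrw : S n * ((1 : H →L[ℝ] H) - Tlim * Slim)
            = S n * ((T n * S n) * ((1 : H →L[ℝ] H) - Tlim * Slim)) := by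
          rw [← mul_assoc, hS1]
        calc ‖S n * ((1 : H →L[ℝ] H) - Tlim * Slim)‖
            = ‖S n * ((T n * S n) * ((1 : H →L[ℝ] H) - Tlim * Slim))‖ := by rw [← hrw]
        _ ≤ ‖S n‖ * ‖(T n * S n) * ((1 : H →L[ℝ] H) - Tlim * Slim)‖ := norm_mul_le _ _
        _ = ‖S n‖ * ‖((1 : H →L[ℝ] H) - Tlim * Slim) * ((T n - Tlim) * S n)‖ := by
            rw [hstar, hsplit]
        _ ≤ ‖S n‖ * (‖(1 : H →L[ℝ] H) - Tlim * Slim‖ * (‖T n - Tlim‖ * ‖S n‖)) := by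
            gcongr
            calc ‖((1 : H →L[ℝ] H) - Tlim * Slim) * ((T n - Tlim) * S n)‖
                ≤ ‖(1 : H →L[ℝ] H) - Tlim * Slim‖ * ‖(T n - Tlim) * S n‖ := norm_mul_le _ _
            _ ≤ ‖(1 : H →L[ℝ] H) - Tlim * Slim‖ * (‖T n - Tlim‖ * ‖S n‖) := by
                gcongr
                exact norm_mul_le _ _
        _ ≤ K * (1 * (ε * K)) := by gcongr
        _ = K * (ε * K) := by ring
      -- facts about 1 - S n * T n
      have hQnidem : (S n * T n) * (S n * T n) = S n * T n := by
        rw [mul_assoc, hT1]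
      have h1Q_sa : IsSelfAdjoint ((1 : H →L[ℝ] H) - S n * T n) :=
        (IsSelfAdjoint.one _).sub hQn
      have h1Qidem : ((1 : H →L[ℝ] H) - S n * T n) * (1 - S n * T n) = 1 - S n * T n := by
        rw [sub_mul, one_mul, mul_sub, mul_one, hQnidem]
        abel
      have h1Q_op : ‖(1 : H →L[ℝ] H) - S n * T n‖ ≤ 1 := by
        apply ContinuousLinearMap.opNorm_le_bound _ zero_le_one
        intro w
        rw [one_mul]
        exact contraction_of_proj _ h1Q_sa h1Qidem w
      -- Term 3
      have hzeroQ : T n * ((1 : H →L[ℝ] H) - S n * T n) = 0 := by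
        rw [mul_sub, mul_one, hT1, sub_self]
      have hsplitQ : (Slim * Tlim) * ((1 : H →L[ℝ] H) - S n * T n)
          = (Slim * (Tlim - T n)) * ((1 : H →L[ℝ] H) - S n * T n) := by
        conv_rhs => rw [mul_sub Slim Tlim (T n),
          sub_mul (Slim * Tlim) (Slim * T n) ((1 : H →L[ℝ] H) - S n * T n),
          mul_assoc Slim (T n) ((1 : H →L[ℝ] H) - S n * T n), hzeroQ, mul_zero, sub_zero]
      have hstarQ : ‖((1 : H →L[ℝ] H) - S n * T n) * (Slim * Tlim)‖
          = ‖(Slim * Tlim) * ((1 : H →L[ℝ] H) - S n * T n)‖ := by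
        rw [← norm_star (((1 : H →L[ℝ] H) - S n * T n) * (Slim * Tlim)), star_mul,
          hQl'.star_eq, h1Q_sa.star_eq]
      have hE3 : ‖((1 : H →L[ℝ] H) - S n * T n) * Slim‖ ≤ ‖Slim‖ * (ε * ‖Slim‖) := by
        have hrw : ((1 : H →L[ℝ] H) - S n * T n) * Slim
            = (((1 : H →L[ℝ] H) - S n * T n) * (Slim * Tlim)) * Slim := by
          rw [mul_assoc ((1 : H →L[ℝ] H) - S n * T n) (Slim * Tlim) Slim,
            mul_assoc Slim Tlim Slim, hS1l']
        calc ‖((1 : H →L[ℝ] H) - S n * T n) * Slim‖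
            = ‖(((1 : H →L[ℝ] H) - S n * T n) * (Slim * Tlim)) * Slim‖ := by rw [← hrw]
        _ ≤ ‖((1 : H →L[ℝ] H) - S n * T n) * (Slim * Tlim)‖ * ‖Slim‖ := norm_mul_le _ _
        _ = ‖(Slim * (Tlim - T n)) * ((1 : H →L[ℝ] H) - S n * T n)‖ * ‖Slim‖ := by
            rw [hstarQ, hsplitQ]
        _ ≤ (‖Slim‖ * ‖Tlim - T n‖ * ‖(1 : H →L[ℝ] H) - S n * T n‖) * ‖Slim‖ := by
            gcongr
            calc ‖(Slim * (Tlim - T n)) * ((1 : H →L[ℝ] H) - S n * T n)‖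
                ≤ ‖Slim * (Tlim - T n)‖ * ‖(1 : H →L[ℝ] H) - S n * T n‖ := norm_mul_le _ _
            _ ≤ ‖Slim‖ * ‖Tlim - T n‖ * ‖(1 : H →L[ℝ] H) - S n * T n‖ := by
                gcongr
                exact norm_mul_le _ _
        _ ≤ (‖Slim‖ * ε * 1) * ‖Slim‖ := by
            gcongr
            rw [norm_sub_rev]
        _ = ‖Slim‖ * (ε * ‖Slim‖) := by ring
      -- assemble
      calc ‖S n - Slim‖
          = ‖-(S n * ((T n - Tlim) * Slim)) + (S n * ((1 : H →L[ℝ] H) - Tlim * Slim))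
              - (((1 : H →L[ℝ] H) - S n * T n) * Slim)‖ := by rw [← hdec]
      _ ≤ ‖-(S n * ((T n - Tlim) * Slim)) + (S n * ((1 : H →L[ℝ] H) - Tlim * Slim))‖
            + ‖((1 : H →L[ℝ] H) - S n * T n) * Slim‖ := norm_sub_le _ _
      _ ≤ ‖S n * ((T n - Tlim) * Slim)‖ + ‖S n * ((1 : H →L[ℝ] H) - Tlim * Slim)‖
            + ‖((1 : H →L[ℝ] H) - S n * T n) * Slim‖ := by
          gcongr
          calc ‖-(S n * ((T n - Tlim) * Slim)) + (S n * ((1 : H →L[ℝ] H) - Tlim * Slim))‖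
              ≤ ‖-(S n * ((T n - Tlim) * Slim))‖ + ‖S n * ((1 : H →L[ℝ] H) - Tlim * Slim)‖ :=
                norm_add_le _ _
          _ = ‖S n * ((T n - Tlim) * Slim)‖ + ‖S n * ((1 : H →L[ℝ] H) - Tlim * Slim)‖ := by
                rw [norm_neg]
      _ ≤ K * (ε * ‖Slim‖) + K * (ε * K) + ‖Slim‖ * (ε * ‖Slim‖) := by
          exact add_le_add (add_le_add hE1 hE2) hE3
      _ = C * ε := by rw [hC]; ring
    · have : Tendsto (fun n => C * ‖T n - Tlim‖) atTop (nhds (C * 0)) := hconv.const_mul C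
      simpa using this
end
end
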